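/- arXiv:1002.1934 — 4 statements merged into one kernel-verified Lean document; each statement's English description precedes it below -/
import Mathlib

section
/- If X is a free-generating set of a group F, then for each x ∈ X, the centralizer of x in F equals the cyclic subgroup generated by x. -/
open FreeGroup in
private lemma aux_invRev_cons {α : Type*} (c : α × Bool) (M : List (α × Bool)) :
    invRev (c :: M) = invRev M ++ [(c.1, !c.2)] := by
  simp [invRev]

private lemma aux_cons_eq_append {β : Type*} (y : β) :
    ∀ (L : List β), y :: L = L ++ [y] → L = List.replicate L.length y := by
  intro L
  induction L with
  | nil => intro _; rfl
  | cons b tl ih =>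
    intro h
    simp only [List.cons_append, List.cons.injEq] at h
    obtain ⟨rfl, h2⟩ := h
    rw [List.length_cons, List.replicate_succ, ← ih h2]

open FreeGroup in
private lemma aux_key {α : Type*} [DecidableEq α] (a : α) :
    ∀ (n : ℕ) (w : FreeGroup α), w.norm = n → Commute w (of a) →
      w ∈ Subgroup.zpowers (of a) := by
  intro n
  induction n using Nat.strong_induction_on with
  | _ n ih =>
    intro w hn hc
    have hL : reduce w.toWord = w.toWord := reduce_toWord w
    have hnorm : w.toWord.length = n := hn
    rcases hLw : w.toWord with _ | ⟨⟨b, bb⟩, tl⟩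
    · have : w = 1 := toWord_eq_nil_iff.mp hLw
      rw [this]; exact one_mem _
    · have hlen : w.toWord.length = tl.length + 1 := by rw [hLw]; rfl
      by_cases hba : b = a
      · subst hba
        cases bb
        · -- head is (b, false); peel with left mult by (of b)
          set w' : FreeGroup α := of b * w with hw'def
          have hmul : w' = mk ((b, true) :: w.toWord) := by
            conv_lhs => rw [hw'def, ← mk_toWord (x := w),
              show (of b : FreeGroup α) = mk [(b, true)] from rfl, mul_mk]
            rfl
          have htw' : w'.toWord = tl := by
            rw [hmul, toWord_mk]
            show reduce ((b, true) :: w.toWord) = tl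
            rw [reduce.cons, hL, hLw]
            simp
          have hn' : w'.norm = tl.length := by rw [← htw']; rfl
          have hlt : w'.norm < n := by omega
          have hc' : Commute w' (of b) := (Commute.refl (of b)).mul_left hc
          have hmem := ih w'.norm hlt w' rfl hc'
          have hw : w = (of b)⁻¹ * w' := (inv_mul_cancel_left (of b) w).symm
          rw [hw]
          exact mul_mem (inv_mem (Subgroup.mem_zpowers _)) hmem
        · -- head is (b, true); peel with left mult by (of b)⁻¹
          set w' : FreeGroup α := (of b)⁻¹ * w with hw'def
          have hmul : w' = mk ((b, false) :: w.toWord) := by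
            conv_lhs => rw [hw'def, ← mk_toWord (x := w),
              show ((of b)⁻¹ : FreeGroup α) = mk [(b, false)] from rfl, mul_mk]
            rfl
          have htw' : w'.toWord = tl := by
            rw [hmul, toWord_mk]
            show reduce ((b, false) :: w.toWord) = tl
            rw [reduce.cons, hL, hLw]
            simp
          have hn' : w'.norm = tl.length := by rw [← htw']; rfl
          have hlt : w'.norm < n := by omega
          have hc' : Commute w' (of b) :=
            ((Commute.refl (of b)).inv_left).mul_left hc
          have hmem := ih w'.norm hlt w' rfl hc'
          have hw : w = of b * w' := (mul_inv_cancel_left (of b) w).symm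
          rw [hw]
          exact mul_mem (Subgroup.mem_zpowers _) hmem
      · -- head letter differs from a
        exfalso
        have h1 : (of a * w).toWord = (a, true) :: w.toWord := by
          conv_lhs => rw [← mk_toWord (x := w),
            show (of a : FreeGroup α) = mk [(a, true)] from rfl, mul_mk]
          rw [toWord_mk]
          show reduce ((a, true) :: w.toWord) = (a, true) :: w.toWord
          rw [reduce.cons, hL, hLw]
          have hne : ¬(((a, true) : α × Bool).1 = ((b, bb) : α × Bool).1 ∧
              ((a, true) : α × Bool).2 = !((b, bb) : α × Bool).2) := by
            rintro ⟨h1', _⟩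
            exact hba h1'.symm
          simp only [if_neg hne]
        have hinvred : reduce (invRev w.toWord) = invRev w.toWord := by
          rw [reduce_invRev, hL]
        rcases hinv : invRev w.toWord with _ | ⟨⟨c, cb⟩, itl⟩
        · have := invRev_length (L₁ := w.toWord)
          rw [hinv, hLw] at this
          simp at this
        · have h2 : ((of a)⁻¹ * w⁻¹).toWord = reduce ((a, false) :: invRev w.toWord) := by
            conv_lhs => rw [← mk_toWord (x := w),
              show ((of a)⁻¹ : FreeGroup α) = mk [(a, false)] from rfl, inv_mk, mul_mk]
            rw [toWord_mk]
            rfl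
          have h3 : (w * of a).toWord = invRev (((of a)⁻¹ * w⁻¹).toWord) := by
            rw [← toWord_inv, mul_inv_rev, inv_inv, inv_inv]
          have heq : (w * of a).toWord = (of a * w).toWord := by rw [hc]
          by_cases hcab : c = a ∧ cb = true
          · -- cancellation at the end: length contradiction
            obtain ⟨hca, hcb⟩ := hcab
            have h4 : reduce ((a, false) :: invRev w.toWord) = itl := by
              rw [reduce.cons, hinvred, hinv]
              simp [hca, hcb]
            have hlen1 : (w * of a).toWord.length = itl.length := by
              rw [h3, h2, h4, invRev_length]
            have hlen2 : (invRev w.toWord).length = w.toWord.length := invRev_length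
            rw [hinv, hLw] at hlen2
            rw [heq, h1, hLw] at hlen1
            simp at hlen1 hlen2
            omega
          · -- no cancellation: w would be a power of (of a), contradicting hba
            have h4 : reduce ((a, false) :: invRev w.toWord) =
                (a, false) :: invRev w.toWord := by
              rw [reduce.cons, hinvred, hinv]
              have hne : ¬((a, false).1 = ((c, cb) : α × Bool).1 ∧
                  ((a, false) : α × Bool).2 = !((c, cb) : α × Bool).2) := by
                rintro ⟨h1', h2'⟩
                exact hcab ⟨h1'.symm, by simpa using h2'.symm⟩
              simp only [if_neg hne]
            have h5 : (w * of a).toWord = w.toWord ++ [(a, true)] := by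
              rw [h3, h2, h4, aux_invRev_cons (a, false) (invRev w.toWord), invRev_invRev]
              rfl
            have h6 : (a, true) :: w.toWord = w.toWord ++ [(a, true)] := by
              rw [← h1, ← heq, h5]
            have h7 := aux_cons_eq_append _ _ h6
            rw [hLw, List.length_cons, List.replicate_succ] at h7
            rw [List.cons.injEq] at h7
            exact hba (congrArg Prod.fst h7.1)

/-- If `X` is a free-generating set of a group `F`, then for each `x ∈ X`, the
centralizer of `x` in `F` equals the cyclic subgroup generated by `x`. -/
theorem stmt_0 {F : Type*} [Group F] (X : Set F)
    (hX : Function.Bijective (FreeGroup.lift (Subtype.val : X → F))) :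
    ∀ x ∈ X, Subgroup.centralizer {x} = Subgroup.zpowers x := by
  classical
  intro x hx
  set e : FreeGroup X ≃* F := MulEquiv.ofBijective _ hX with he
  have heof : ∀ y : X, e (FreeGroup.of y) = (y : F) := fun y => FreeGroup.lift_apply_of
  ext f
  constructor
  · intro hf
    have hcomm : f * x = x * f := Subgroup.mem_centralizer_singleton_iff.mp hf
    set w : FreeGroup X := e.symm f with hw
    have hew : e w = f := e.apply_symm_apply f
    have hc : Commute w (FreeGroup.of (⟨x, hx⟩ : X)) := by
      apply e.injective
      rw [map_mul, map_mul, hew, heof]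
      exact hcomm
    obtain ⟨k, hk⟩ := Subgroup.mem_zpowers_iff.mp
      (aux_key (⟨x, hx⟩ : X) w.norm w rfl hc)
    refine Subgroup.mem_zpowers_iff.mpr ⟨k, ?_⟩
    rw [← hew, ← hk, map_zpow, heof]
  · intro hf
    obtain ⟨k, hk⟩ := Subgroup.mem_zpowers_iff.mp hf
    rw [Subgroup.mem_centralizer_singleton_iff, ← hk]
    exact ((Commute.refl x).zpow_left k).symm.eq.symm
end

section
/- Let F be a group, f ∈ F, N ⊴ F with F/N infinite cyclic generated by fN, F̃ := F * ⟨z⟩, and Ñ the normal closure in F̃ of N ∪ {f z⁻¹}. Then Ñ is the internal free product N * ⟨{fⁱ (f z⁻¹) f⁻ⁱ : i ∈ ℤ}⟩, where the second factor is freely generated by the conjugates fⁱ(f z⁻¹)f⁻ⁱ for i ∈ ℤ; in particular, N is a free factor of Ñ. -/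
open Monoid Subgroup

section Aux
variable {F : Type*} [Group F] (N : Subgroup F) [N.Normal] (f : F)

/-- The shift endomorphism of `N ∗ F(ℤ)`: conjugation by `f^k` on `N`, index shift on `F(ℤ)`. -/
def shiftM (k : ℤ) : Coprod N (FreeGroup ℤ) →* Coprod N (FreeGroup ℤ) :=
  Coprod.map (MulAut.conjNormal (f ^ k)).toMonoidHom (FreeGroup.lift fun i => FreeGroup.of (i + k))

@[simp] lemma shiftM_inl (k : ℤ) (n : N) :
    shiftM N f k (Coprod.inl n) = Coprod.inl (MulAut.conjNormal (f ^ k) n) := rfl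

@[simp] lemma shiftM_inr_of (k : ℤ) (i : ℤ) :
    shiftM N f k (Coprod.inr (FreeGroup.of i)) = Coprod.inr (FreeGroup.of (i + k)) := by
  simp [shiftM]

lemma shiftM_comp (k l : ℤ) : (shiftM N f k).comp (shiftM N f l) = shiftM N f (l + k) := by
  apply Coprod.hom_ext
  · ext n
    show shiftM N f k (shiftM N f l (Coprod.inl n)) = shiftM N f (l + k) (Coprod.inl n)
    simp only [shiftM_inl]
    congr 1
    ext
    simp only [MulAut.conjNormal_apply]
    group
  · apply FreeGroup.ext_hom
    intro i
    show shiftM N f k (shiftM N f l (Coprod.inr (FreeGroup.of i)))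
      = shiftM N f (l + k) (Coprod.inr (FreeGroup.of i))
    simp [add_assoc]

@[simp] lemma shiftM_zero : shiftM N f 0 = MonoidHom.id _ := by
  apply Coprod.hom_ext
  · ext n; simp [Subtype.ext_iff]
  · apply FreeGroup.ext_hom; intro i; simp

lemma shiftM_apply_comp (k l : ℤ) (x : Coprod N (FreeGroup ℤ)) :
    shiftM N f k (shiftM N f l x) = shiftM N f (l + k) x :=
  DFunLike.congr_fun (shiftM_comp N f k l) x

/-- The `ℤ`-action on `N ∗ F(ℤ)` as a `MulAut`-valued homomorphism. -/
def autM : Multiplicative ℤ →* MulAut (Coprod N (FreeGroup ℤ)) :=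
  MonoidHom.mk'
    (fun k => MonoidHom.toMulEquiv (shiftM N f k.toAdd) (shiftM N f (-k.toAdd))
      (by rw [shiftM_comp]; simp)
      (by rw [shiftM_comp]; simp))
    (by
      intro a b
      apply MulEquiv.ext
      intro x
      simp only [MonoidHom.toMulEquiv_apply, MulAut.mul_apply]
      rw [shiftM_apply_comp]
      congr 1
      simp [add_comm])

@[simp] lemma autM_apply (k : Multiplicative ℤ) (x : Coprod N (FreeGroup ℤ)) :
    autM N f k x = shiftM N f k.toAdd x := rfl


/-- The homomorphism `F → (N ∗ F(ℤ)) ⋊ ℤ` given by `g ↦ (g f^{-κ g}, κ g)`. -/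
def theta (κ : F →* Multiplicative ℤ) (hκ : ∀ g : F, g * f ^ (-(κ g).toAdd) ∈ N) :
    F →* (Coprod N (FreeGroup ℤ)) ⋊[autM N f] Multiplicative ℤ :=
  MonoidHom.mk' (fun g => ⟨Coprod.inl ⟨g * f ^ (-(κ g).toAdd), hκ g⟩, κ g⟩) (by
    intro g h
    rw [SemidirectProduct.mul_def]
    refine SemidirectProduct.ext ?_ (map_mul κ g h)
    dsimp only
    rw [autM_apply, shiftM_inl, ← map_mul]
    congr 1
    apply Subtype.ext
    simp only [Subgroup.coe_mul, MulAut.conjNormal_apply, map_mul, toAdd_mul, neg_add]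
    group)

@[simp] lemma theta_left (κ : F →* Multiplicative ℤ)
    (hκ : ∀ g : F, g * f ^ (-(κ g).toAdd) ∈ N) (g : F) :
    (theta N f κ hκ g).left = Coprod.inl ⟨g * f ^ (-(κ g).toAdd), hκ g⟩ := rfl

@[simp] lemma theta_right (κ : F →* Multiplicative ℤ)
    (hκ : ∀ g : F, g * f ^ (-(κ g).toAdd) ∈ N) (g : F) :
    (theta N f κ hκ g).right = κ g := rfl


lemma ofAdd_one_zpow (j : ℤ) : (Multiplicative.ofAdd (1 : ℤ)) ^ j = Multiplicative.ofAdd j := by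
  rw [← ofAdd_zsmul, smul_eq_mul, mul_one]

/-- The big homomorphism `F ∗ F(Unit) → (N ∗ F(ℤ)) ⋊ ℤ`. -/
def Theta (κ : F →* Multiplicative ℤ) (hκ : ∀ g : F, g * f ^ (-(κ g).toAdd) ∈ N) :
    Coprod F (FreeGroup Unit) →* (Coprod N (FreeGroup ℤ)) ⋊[autM N f] Multiplicative ℤ :=
  Coprod.lift (theta N f κ hκ)
    (FreeGroup.lift fun _ =>
      ⟨(Coprod.inr (FreeGroup.of (0 : ℤ)))⁻¹, Multiplicative.ofAdd 1⟩)

lemma Theta_apply_inl (κ : F →* Multiplicative ℤ) (hκ : ∀ g : F, g * f ^ (-(κ g).toAdd) ∈ N)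
    (g : F) : Theta N f κ hκ (Coprod.inl g) = theta N f κ hκ g :=
  Coprod.lift_apply_inl _ _ _

lemma Theta_inl_f (κ : F →* Multiplicative ℤ) (hκ : ∀ g : F, g * f ^ (-(κ g).toAdd) ∈ N)
    (hκf : κ f = Multiplicative.ofAdd 1) :
    Theta N f κ hκ (Coprod.inl f) = SemidirectProduct.inr (Multiplicative.ofAdd 1) := by
  rw [Theta_apply_inl]
  refine SemidirectProduct.ext ?_ ?_
  · rw [theta_left]
    have : (⟨f * f ^ (-(κ f).toAdd), hκ f⟩ : N) = 1 := by
      ext; simp [hκf]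
    rw [this, map_one]
    rfl
  · rw [theta_right, hκf]; rfl

lemma Theta_z (κ : F →* Multiplicative ℤ) (hκ : ∀ g : F, g * f ^ (-(κ g).toAdd) ∈ N) :
    Theta N f κ hκ (Coprod.inr (FreeGroup.of ())) =
      ⟨(Coprod.inr (FreeGroup.of (0 : ℤ)))⁻¹, Multiplicative.ofAdd 1⟩ := by
  show Coprod.lift _ _ (Coprod.inr (FreeGroup.of ())) = _
  rw [Coprod.lift_apply_inr, FreeGroup.lift_apply_of]

lemma Theta_word (κ : F →* Multiplicative ℤ) (hκ : ∀ g : F, g * f ^ (-(κ g).toAdd) ∈ N)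
    (hκf : κ f = Multiplicative.ofAdd 1) (i : ℤ) :
    Theta N f κ hκ ((Coprod.inl f) ^ i *
      (Coprod.inl f * (Coprod.inr (FreeGroup.of ()) : Coprod F (FreeGroup Unit))⁻¹) *
      (Coprod.inl f) ^ (-i))
    = SemidirectProduct.inl (Coprod.inr (FreeGroup.of i)) := by
  have hz' : Theta N f κ hκ (Coprod.inr (FreeGroup.of ())) =
      SemidirectProduct.inl ((Coprod.inr (FreeGroup.of (0 : ℤ)))⁻¹ : Coprod N (FreeGroup ℤ)) *
      SemidirectProduct.inr (Multiplicative.ofAdd 1) := by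
    rw [Theta_z N f κ hκ, SemidirectProduct.mk_eq_inl_mul_inr]
  have hpow : ∀ j : ℤ, (SemidirectProduct.inr (Multiplicative.ofAdd (1 : ℤ)) :
      Coprod N (FreeGroup ℤ) ⋊[autM N f] Multiplicative ℤ) ^ j
      = SemidirectProduct.inr (Multiplicative.ofAdd j) := by
    intro j
    rw [← map_zpow (SemidirectProduct.inr : Multiplicative ℤ →*
      Coprod N (FreeGroup ℤ) ⋊[autM N f] Multiplicative ℤ), ofAdd_one_zpow]
  rw [map_mul, map_mul, map_mul, map_inv, map_zpow, map_zpow, Theta_inl_f N f κ hκ hκf, hz',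
    hpow, hpow, mul_inv_rev, map_inv, inv_inv,
    mul_inv_cancel_left,
    show Multiplicative.ofAdd (-i) = (Multiplicative.ofAdd i)⁻¹ from rfl, map_inv,
    mul_assoc]
  rw [← mul_assoc, ← map_inv (SemidirectProduct.inr : Multiplicative ℤ →*
    Coprod N (FreeGroup ℤ) ⋊[autM N f] Multiplicative ℤ), ← SemidirectProduct.inl_aut, autM_apply, shiftM_inr_of, zero_add, toAdd_ofAdd]


/-- The canonical map `N ∗ F(ℤ) → F ∗ F(Unit)`. -/
def PhiDef : Coprod N (FreeGroup ℤ) →* Coprod F (FreeGroup Unit) :=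
  Coprod.lift ((Coprod.inl : F →* Coprod F (FreeGroup Unit)).comp N.subtype)
    (FreeGroup.lift (fun i : ℤ =>
      (Coprod.inl f) ^ i * (Coprod.inl f * (Coprod.inr (FreeGroup.of ()))⁻¹) *
        (Coprod.inl f) ^ (-i)))

lemma PhiDef_inl (n : N) : PhiDef N f (Coprod.inl n) = Coprod.inl (n : F) :=
  Coprod.lift_apply_inl _ _ _

lemma PhiDef_of (i : ℤ) : PhiDef N f (Coprod.inr (FreeGroup.of i)) =
    (Coprod.inl f) ^ i * (Coprod.inl f * (Coprod.inr (FreeGroup.of ()))⁻¹) *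
      (Coprod.inl f) ^ (-i) := by
  rw [PhiDef, Coprod.lift_apply_inr, FreeGroup.lift_apply_of]

lemma Theta_comp_PhiDef (κ : F →* Multiplicative ℤ)
    (hκ : ∀ g : F, g * f ^ (-(κ g).toAdd) ∈ N)
    (hκf : κ f = Multiplicative.ofAdd 1) (hκN : ∀ n : N, κ (n : F) = 1) :
    (Theta N f κ hκ).comp (PhiDef N f) = SemidirectProduct.inl := by
  apply Coprod.hom_ext
  · refine MonoidHom.ext fun n => ?_
    show Theta N f κ hκ (PhiDef N f (Coprod.inl n)) = SemidirectProduct.inl (Coprod.inl n)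
    rw [PhiDef_inl, Theta_apply_inl]
    refine SemidirectProduct.ext ?_ ?_
    · rw [theta_left, SemidirectProduct.left_inl]
      congr 1
      ext
      simp [hκN n]
    · rw [theta_right, hκN n, SemidirectProduct.right_inl]
  · apply FreeGroup.ext_hom
    intro i
    show Theta N f κ hκ (PhiDef N f (Coprod.inr (FreeGroup.of i)))
      = SemidirectProduct.inl (Coprod.inr (FreeGroup.of i))
    rw [PhiDef_of]
    exact Theta_word N f κ hκ hκf i

lemma conj_PhiDef (k : ℤ) :
    ((MulAut.conj (Coprod.inl (f ^ k) : Coprod F (FreeGroup Unit))).toMonoidHom.comp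
      (PhiDef N f)) = (PhiDef N f).comp (shiftM N f k) := by
  apply Coprod.hom_ext
  · ext n
    show Coprod.inl (f ^ k) * PhiDef N f (Coprod.inl n) * (Coprod.inl (f ^ k))⁻¹
      = PhiDef N f (shiftM N f k (Coprod.inl n))
    rw [shiftM_inl, PhiDef_inl, PhiDef_inl, MulAut.conjNormal_apply, map_mul, map_mul, map_inv]
  · apply FreeGroup.ext_hom
    intro i
    show Coprod.inl (f ^ k) * PhiDef N f (Coprod.inr (FreeGroup.of i)) * (Coprod.inl (f ^ k))⁻¹
      = PhiDef N f (shiftM N f k (Coprod.inr (FreeGroup.of i)))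
    rw [shiftM_inr_of, PhiDef_of, PhiDef_of, map_zpow]
    group

lemma conj_PhiDef_apply (k : ℤ) (m : Coprod N (FreeGroup ℤ)) :
    Coprod.inl (f ^ k) * PhiDef N f m * (Coprod.inl (f ^ k))⁻¹
      = PhiDef N f (shiftM N f k m) := by
  have h := DFunLike.congr_fun (conj_PhiDef N f k) m
  simpa only [MonoidHom.comp_apply, MulEquiv.coe_toMonoidHom, MulAut.conj_apply] using h

end Aux

/-- With `F̃ = F ∗ ⟨z⟩` and `Ñ` the normal closure of `N ∪ {f z⁻¹}`, the subgroup
`Ñ` is the internal free product of `N` and the free group on the conjugates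
`fⁱ (f z⁻¹) f⁻ⁱ`, `i ∈ ℤ`: the canonical homomorphism
`N ∗ F(ℤ) → F̃` is injective with image `Ñ`.  In particular `N` is a free
factor of `Ñ`. -/
theorem stmt_7 {F : Type*} [Group F] (N : Subgroup F) [N.Normal] (f : F)
    (hgen : Subgroup.zpowers ((QuotientGroup.mk f : F ⧸ N)) = ⊤)
    (hinf : Infinite (F ⧸ N))
    (z : Coprod F (FreeGroup Unit)) (hz : z = Coprod.inr (FreeGroup.of ()))
    (Φ : Coprod N (FreeGroup ℤ) →* Coprod F (FreeGroup Unit))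
    (hΦ : Φ = Coprod.lift ((Coprod.inl : F →* Coprod F (FreeGroup Unit)).comp N.subtype)
      (FreeGroup.lift (fun i : ℤ =>
        (Coprod.inl f) ^ i * (Coprod.inl f * z⁻¹) * (Coprod.inl f) ^ (-i)))) :
    Function.Injective Φ ∧
    Φ.range = Subgroup.normalClosure
      ((Coprod.inl '' (N : Set F)) ∪ {Coprod.inl f * z⁻¹}) := by
  subst hz
  have hΦ' : Φ = PhiDef N f := hΦ
  subst hΦ'
  clear hΦ
  -- the quotient is infinite cyclic generated by `q := mk f`
  set q : F ⧸ N := (QuotientGroup.mk f : F ⧸ N) with hq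
  have hord : ¬ IsOfFinOrder q := by
    intro h
    have hfin : ((Subgroup.zpowers q : Subgroup (F ⧸ N)) : Set (F ⧸ N)).Finite :=
      h.finite_zpowers
    rw [hgen] at hfin
    simp only [Subgroup.coe_top] at hfin
    exact Set.infinite_univ hfin
  have hinjq : Function.Injective (fun k : ℤ => q ^ k) :=
    injective_zpow_iff_not_isOfFinOrder.2 hord
  set pow : Multiplicative ℤ →* F ⧸ N :=
    MonoidHom.mk' (fun k => q ^ k.toAdd) (fun a b => by simp [zpow_add]) with hpowdef
  have hsurj : Function.Surjective pow := by
    intro y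
    have hy : y ∈ Subgroup.zpowers q := by rw [hgen]; trivial
    obtain ⟨k, hk⟩ := Subgroup.mem_zpowers_iff.mp hy
    exact ⟨Multiplicative.ofAdd k, hk⟩
  have hbij : Function.Bijective pow :=
    ⟨fun a b hab => Multiplicative.toAdd.injective (hinjq hab), hsurj⟩
  set e : Multiplicative ℤ ≃* F ⧸ N := MulEquiv.ofBijective pow hbij with hedef
  set κ : F →* Multiplicative ℤ := e.symm.toMonoidHom.comp (QuotientGroup.mk' N) with hκdef
  have hκapp : ∀ g : F, κ g = e.symm (QuotientGroup.mk g) := fun g => rfl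
  have hκmk : ∀ g : F, (QuotientGroup.mk g : F ⧸ N) = q ^ (κ g).toAdd := by
    intro g
    have h1 : e (κ g) = QuotientGroup.mk g := by rw [hκapp, e.apply_symm_apply]
    rw [← h1]
    rfl
  have hκ : ∀ g : F, g * f ^ (-(κ g).toAdd) ∈ N := by
    intro g
    rw [← QuotientGroup.eq_one_iff]
    have h1 : (QuotientGroup.mk (g * f ^ (-(κ g).toAdd)) : F ⧸ N)
        = QuotientGroup.mk g * (QuotientGroup.mk f : F ⧸ N) ^ (-(κ g).toAdd) := by
      rw [QuotientGroup.mk_mul, QuotientGroup.mk_zpow]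
    rw [h1, hκmk g, ← hq, ← zpow_add, add_neg_cancel, zpow_zero]
  have hκf : κ f = Multiplicative.ofAdd 1 := by
    rw [hκapp, MulEquiv.symm_apply_eq]
    show (q : F ⧸ N) = q ^ (Multiplicative.toAdd (Multiplicative.ofAdd (1 : ℤ)))
    rw [toAdd_ofAdd, zpow_one]
  have hκN : ∀ n : N, κ (n : F) = 1 := by
    intro n
    rw [hκapp, (QuotientGroup.eq_one_iff (n : F)).2 n.2, map_one]
  have hcomp := Theta_comp_PhiDef N f κ hκ hκf hκN
  constructor
  · intro a b hab
    have ha := DFunLike.congr_fun hcomp a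
    have hb := DFunLike.congr_fun hcomp b
    simp only [MonoidHom.comp_apply] at ha hb
    exact SemidirectProduct.inl_injective (by rw [← ha, ← hb, hab])
  · have hS : ((Coprod.inl '' (N : Set F)) ∪
        {Coprod.inl f * (Coprod.inr (FreeGroup.of ()) : Coprod F (FreeGroup Unit))⁻¹})
        ⊆ ((PhiDef N f).range : Set (Coprod F (FreeGroup Unit))) := by
      rintro x (⟨n, hn, rfl⟩ | rfl)
      · exact ⟨Coprod.inl ⟨n, hn⟩, PhiDef_inl N f _⟩
      · refine ⟨Coprod.inr (FreeGroup.of 0), ?_⟩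
        rw [PhiDef_of, neg_zero, zpow_zero, one_mul, mul_one]
    have fwd : ∀ (k : ℤ) (x), x ∈ (PhiDef N f).range →
        Coprod.inl (f ^ k) * x * (Coprod.inl (f ^ k))⁻¹ ∈ (PhiDef N f).range := by
      rintro k x ⟨m, rfl⟩
      exact ⟨shiftM N f k m, (conj_PhiDef_apply N f k m).symm⟩
    have hconj : ∀ k : ℤ, Coprod.inl (f ^ k) ∈ Subgroup.normalizer ((PhiDef N f).range : Set (Coprod F (FreeGroup Unit))) := by
      intro k
      rw [Subgroup.mem_normalizer_iff]
      intro x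
      refine ⟨fwd k x, fun hx => ?_⟩
      have h2 := fwd (-k) _ hx
      have e1 : (Coprod.inl (f ^ (-k)) : Coprod F (FreeGroup Unit))
          = (Coprod.inl (f ^ k))⁻¹ := by rw [zpow_neg, map_inv]
      rw [e1] at h2
      have e2 : (Coprod.inl (f ^ k) : Coprod F (FreeGroup Unit))⁻¹ *
          (Coprod.inl (f ^ k) * x * (Coprod.inl (f ^ k))⁻¹) *
          ((Coprod.inl (f ^ k))⁻¹)⁻¹ = x := by group
      rwa [e2] at h2
    have hnormalizer : Subgroup.normalizer ((PhiDef N f).range : Set (Coprod F (FreeGroup Unit))) = ⊤ := by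
      rw [eq_top_iff, ← Coprod.range_inl_sup_range_inr, sup_le_iff]
      constructor
      · rintro x ⟨g, rfl⟩
        have hdecomp : (Coprod.inl g : Coprod F (FreeGroup Unit))
            = Coprod.inl (g * f ^ (-(κ g).toAdd)) * Coprod.inl (f ^ ((κ g).toAdd)) := by
          rw [← map_mul]
          congr 1
          group
        rw [hdecomp]
        exact mul_mem (Subgroup.le_normalizer (hS (Or.inl ⟨_, hκ g, rfl⟩))) (hconj _)
      · rintro x ⟨w, rfl⟩
        induction w using FreeGroup.induction_on with
        | C1 => rw [map_one]; exact one_mem _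
        | of u =>
          have hzz : (Coprod.inr (FreeGroup.of u) : Coprod F (FreeGroup Unit))
              = (Coprod.inl f * (Coprod.inr (FreeGroup.of ()))⁻¹)⁻¹ * Coprod.inl f := by
            cases u
            group
          rw [hzz]
          refine mul_mem (inv_mem (Subgroup.le_normalizer (hS (Or.inr rfl)))) ?_
          have h1 := hconj 1
          rwa [zpow_one] at h1
        | inv_of u ih => simp only [map_inv]; exact inv_mem ih
        | mul a b iha ihb => simp only [map_mul]; exact mul_mem iha ihb
    haveI hRn : (PhiDef N f).range.Normal := Subgroup.normalizer_eq_top_iff.mp hnormalizer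
    apply le_antisymm
    · rintro x ⟨m, rfl⟩
      induction m using Coprod.induction_on with
      | inl n =>
        rw [PhiDef_inl]
        exact Subgroup.subset_normalClosure (Or.inl ⟨(n : F), n.2, rfl⟩)
      | inr w =>
        induction w using FreeGroup.induction_on with
        | C1 => rw [map_one]; exact one_mem _
        | of i =>
          rw [PhiDef_of]
          have hmem : Coprod.inl f * (Coprod.inr (FreeGroup.of ()) : Coprod F (FreeGroup Unit))⁻¹
              ∈ Subgroup.normalClosure ((Coprod.inl '' (N : Set F)) ∪
                {Coprod.inl f * (Coprod.inr (FreeGroup.of ()))⁻¹}) :=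
            Subgroup.subset_normalClosure (Or.inr rfl)
          have h3 := Subgroup.normalClosure_normal.conj_mem _ hmem
            ((Coprod.inl f : Coprod F (FreeGroup Unit)) ^ i)
          rwa [← zpow_neg] at h3
        | inv_of i ih => simp only [map_inv]; exact inv_mem ih
        | mul a b iha ihb => simp only [map_mul]; exact mul_mem iha ihb
      | mul a b iha ihb => rw [map_mul]; exact mul_mem iha ihb
    · exact Subgroup.normalClosure_le_normal hS
end

section
/- Let N be a group that is a free product ∗_{i∈I} C_i of finite cyclic groups C_i. Then every torsion-free subgroup of N is free. -/
open CategoryTheory MulAction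

namespace KuroshAux

open scoped Classical

universe u

variable {G : Type u} [Group G] {A : Type u} [MulAction G A]

section cyc

variable (x : G)

/-- orbit relation of the cyclic subgroup generated by `x`. -/
def crel (a b : A) : Prop := ∃ k : ℕ, x ^ k • a = b

variable (hm : 0 < orderOf x)
include hm

theorem crel_equiv : Equivalence (crel (A := A) x) := by
  constructor
  · intro a; exact ⟨0, by simp⟩
  · rintro a b ⟨k, rfl⟩
    refine ⟨orderOf x * k - k, ?_⟩
    rw [smul_smul, ← pow_add]
    rw [Nat.sub_add_cancel (Nat.le_mul_of_pos_left k hm)]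
    rw [pow_mul, pow_orderOf_eq_one, one_pow, one_smul]
  · rintro a b c ⟨k, rfl⟩ ⟨l, rfl⟩
    exact ⟨l + k, by rw [smul_smul, ← pow_add]⟩

/-- The setoid of `⟨x⟩`-orbits. -/
def cSetoid (h : 0 < orderOf x) : Setoid A := ⟨crel x, crel_equiv x h⟩

/-- A choice of representative in each orbit. -/
noncomputable def rep (h : 0 < orderOf x) (a : A) : A := (Quotient.mk (cSetoid x h) a).out

theorem rep_exists (a : A) : ∃ k : ℕ, x ^ k • rep x hm a = a :=
  Quotient.mk_out (s := cSetoid x hm) a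

theorem rep_crel {a b : A} (h : crel x a b) : rep x hm a = rep x hm b :=
  congrArg Quotient.out (Quotient.sound (s := cSetoid x hm) h)

theorem rep_smul (a : A) : rep x hm (x • a) = rep x hm a :=
  (rep_crel x hm ⟨1, by rw [pow_one]⟩).symm

theorem rep_rep (a : A) : rep x hm (rep x hm a) = rep x hm a := by
  obtain ⟨k, hk⟩ := rep_exists x hm a
  exact rep_crel x hm ⟨k, hk⟩

/-- The index of a point in its orbit: `a = x ^ idx a • rep a` with `idx` minimal. -/
noncomputable def idx (h : 0 < orderOf x) (a : A) : ℕ := Nat.find (rep_exists x h a)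

theorem idx_spec (a : A) : x ^ idx x hm a • rep x hm a = a :=
  Nat.find_spec (rep_exists x hm a)

theorem idx_lt (a : A) : idx x hm a < orderOf x := by
  by_contra hlt
  push_neg at hlt
  have h2 : x ^ (idx x hm a - orderOf x) • rep x hm a = a := by
    conv_rhs => rw [← idx_spec x hm a]
    congr 1
    conv_rhs => rw [← Nat.sub_add_cancel hlt]
    rw [pow_add, pow_orderOf_eq_one, mul_one]
  exact Nat.find_min (rep_exists x hm a)
    (Nat.sub_lt (lt_of_lt_of_le hm hlt) hm) h2

theorem idx_rep (a : A) : idx x hm (rep x hm a) = 0 := by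
  rw [idx, Nat.find_eq_zero]
  rw [pow_zero, one_smul, rep_rep]

theorem eq_rep_of_idx_eq_zero {a : A} (h : idx x hm a = 0) : a = rep x hm a := by
  conv_lhs => rw [← idx_spec x hm a, h, pow_zero, one_smul]

variable (hfree : ∀ (k : ℕ) (a : A), x ^ k • a = a → orderOf x ∣ k)
include hfree

theorem mod_eq_of_pow_smul_eq {p q : ℕ} {b : A} (h : x ^ p • b = x ^ q • b) :
    p % orderOf x = q % orderOf x := by
  set m := orderOf x with hmdef
  have key : x ^ ((m * q - q) + p) • b = b := by
    rw [pow_add, mul_smul, h, smul_smul, ← pow_add]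
    rw [Nat.sub_add_cancel (Nat.le_mul_of_pos_left q hm)]
    rw [pow_mul, pow_orderOf_eq_one, one_pow, one_smul]
  obtain ⟨t, ht⟩ : m ∣ (m * q - q) + p := hfree _ _ key
  have hq : q ≤ m * q := Nat.le_mul_of_pos_left q hm
  calc p % m = (p + m * q) % m := (Nat.add_mul_mod_self_left p m q).symm
    _ = (q + ((m * q - q) + p)) % m := by congr 1; omega
    _ = (q + m * t) % m := by rw [ht]
    _ = q % m := Nat.add_mul_mod_self_left q m t

theorem idx_smul (a : A) :
    idx x hm (x • a) = (idx x hm a + 1) % orderOf x := by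
  have h1 : x ^ (idx x hm a + 1) • rep x hm (x • a) = x • a := by
    rw [rep_smul, pow_succ', mul_smul, idx_spec]
  have h2 : x ^ (idx x hm (x • a)) • rep x hm (x • a) = x • a := idx_spec x hm (x • a)
  have := mod_eq_of_pow_smul_eq x hm hfree (h2.trans h1.symm)
  rwa [Nat.mod_eq_of_lt (idx_lt x hm (x • a))] at this

theorem idx_pow_smul (k : ℕ) (a : A) :
    idx x hm (x ^ k • a) = (idx x hm a + k) % orderOf x := by
  induction k with
  | zero => rw [pow_zero, one_smul, Nat.add_zero, Nat.mod_eq_of_lt (idx_lt x hm a)]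
  | succ k ih =>
    rw [pow_succ', mul_smul, idx_smul x hm hfree, ih, Nat.mod_add_mod,
      Nat.add_assoc]

end cyc

section chain

variable {X : Type u} [Group X] (ℓ : A → X) (x : G)

/-- Product of labels along an orbit segment. -/
def chain : ℕ → A → X
  | 0, _ => 1
  | (k+1), r => ℓ (x ^ k • r) * chain k r

/-- The potential function on `A`. -/
noncomputable def delta (h : 0 < orderOf x) (a : A) : X :=
  chain ℓ x (idx x h a) (rep x h a)

variable (hm : 0 < orderOf x)
  (hfree : ∀ (k : ℕ) (a : A), x ^ k • a = a → orderOf x ∣ k)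
include hm hfree

theorem delta_smul {a : A} (h : idx x hm (x • a) ≠ 0) :
    delta ℓ x hm (x • a) = ℓ a * delta ℓ x hm a := by
  have hidx : idx x hm (x • a) = idx x hm a + 1 := by
    rw [idx_smul x hm hfree a] at h ⊢
    have hlt : idx x hm a + 1 ≤ orderOf x := idx_lt x hm a
    rcases lt_or_eq_of_le hlt with hlt | heq
    · exact Nat.mod_eq_of_lt hlt
    · rw [heq, Nat.mod_self] at h; exact absurd rfl h
  rw [delta, hidx, rep_smul, chain, idx_spec]
  rfl

end chain

section sdp

variable {X : Type u} [Group X]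

theorem mulAutArrow_apply' (g : G) (f : A → X) (b : A) :
    mulAutArrow g f b = f (g⁻¹ • b) := rfl

/-- The coboundary homomorphism into the semidirect product. -/
def cbd {K : Type*} [Group K] (ρ : K →* G) (δ : A → X) :
    K →* (A → X) ⋊[mulAutArrow] G where
  toFun c := ⟨fun b => δ b * (δ ((ρ c)⁻¹ • b))⁻¹, ρ c⟩
  map_one' := by ext <;> simp
  map_mul' c c' := by
    ext b
    · rw [SemidirectProduct.mul_left, Pi.mul_apply, mulAutArrow_apply']
      show δ b * (δ ((ρ (c * c'))⁻¹ • b))⁻¹ =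
        (δ b * (δ ((ρ c)⁻¹ • b))⁻¹) *
          ((δ ((ρ c)⁻¹ • b)) * (δ ((ρ c')⁻¹ • (ρ c)⁻¹ • b))⁻¹)
      rw [map_mul, mul_inv_rev, mul_smul]
      group
    · simp

@[simp] theorem cbd_right {K : Type*} [Group K] (ρ : K →* G) (δ : A → X) (c : K) :
    (cbd ρ δ c).right = ρ c := rfl

theorem cbd_left {K : Type*} [Group K] (ρ : K →* G) (δ : A → X) (c : K) (b : A) :
    (cbd ρ δ c).left b = δ b * (δ ((ρ c)⁻¹ • b))⁻¹ := rfl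

/-- Iterated twisted product. -/
def wfun (φ : A → X) (x : G) : ℕ → A → X
  | 0, _ => 1
  | (n+1), b => φ b * wfun φ x n (x⁻¹ • b)

theorem pow_left_eq (φ : A → X) (x : G) (n : ℕ) :
    (((⟨φ, x⟩ : (A → X) ⋊[mulAutArrow] G)) ^ n).left = wfun φ x n := by
  induction n with
  | zero => rfl
  | succ n ih =>
    funext b
    have h : (((⟨φ, x⟩ : (A → X) ⋊[mulAutArrow] G)) ^ (n+1)).left b
        = φ b * (((⟨φ, x⟩ : (A → X) ⋊[mulAutArrow] G)) ^ n).left (x⁻¹ • b) := by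
      rw [pow_succ', SemidirectProduct.mul_left, Pi.mul_apply, mulAutArrow_apply']
    rw [h, ih, wfun]

theorem left_eq_of_pow (u v : A → X) (x : G) (hm : 0 < orderOf x)
    (hfree : ∀ (k : ℕ) (a : A), x ^ k • a = a → orderOf x ∣ k)
    (r : A) (hr : idx x hm r = 0)
    (huv : ∀ b : A, idx x hm b ≠ 0 → u b = v b)
    (hu : wfun u x (orderOf x) = 1) (hv : wfun v x (orderOf x) = 1) :
    u r = v r := by
  have claim : ∀ n, n < orderOf x →
      wfun u x (n+1) (x ^ n • r) * (u r)⁻¹ = wfun v x (n+1) (x ^ n • r) * (v r)⁻¹ := by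
    intro n
    induction n with
    | zero => intro _; simp [wfun]
    | succ n ih =>
      intro hn
      have hs : x⁻¹ • (x ^ (n+1) • r) = x ^ n • r := by
        rw [smul_smul, pow_succ', inv_mul_cancel_left]
      have hne : idx x hm (x ^ (n+1) • r) ≠ 0 := by
        rw [idx_pow_smul x hm hfree, hr, Nat.zero_add, Nat.mod_eq_of_lt hn]
        exact Nat.succ_ne_zero n
      show u _ * wfun u x (n+1) _ * _ = v _ * wfun v x (n+1) _ * _
      rw [hs, mul_assoc, mul_assoc, ih (Nat.lt_of_succ_lt hn), huv _ hne]
  have hm1 : orderOf x - 1 < orderOf x := Nat.sub_lt hm Nat.one_pos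
  have := claim (orderOf x - 1) hm1
  rw [Nat.sub_add_cancel hm] at this
  rw [hu, hv] at this
  simpa using this

theorem hom_eq_of_generator {K S : Type*} [Group K] [Group S] {gen : K}
    (hgen : ∀ c, c ∈ Subgroup.zpowers gen) {f₁ f₂ : K →* S}
    (h : f₁ gen = f₂ gen) : f₁ = f₂ :=
  MonoidHom.ext fun c => by
    obtain ⟨k, rfl⟩ := hgen c
    rw [map_zpow, map_zpow, h]

end sdp

section main

open Monoid CategoryTheory.ActionCategory

variable {ι : Type v} {C : ι → Type w} [∀ i, Group (C i)]
  (g : ∀ i, C i) (H : Subgroup (Monoid.CoprodI C))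

/-- The chosen generator of the `i`-th factor, inside the coproduct. -/
def xg (i : ι) : Monoid.CoprodI C := Monoid.CoprodI.of (g i)

variable (hm : ∀ i, 0 < orderOf (xg g i))
  (hfree : ∀ i (k : ℕ) (a : Monoid.CoprodI C ⧸ H),
      xg g i ^ k • a = a → orderOf (xg g i) ∣ k)
  (hgen : ∀ i (c : C i), c ∈ Subgroup.zpowers (g i))
  (hord : ∀ i, g i ^ orderOf (xg g i) = 1)

/-- The action groupoid of a free product of cyclic groups acting on the cosets of a
torsion-free subgroup is a free groupoid. -/
noncomputable def freeGroupoidOfTorsionFree :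
    IsFreeGroupoid (ActionCategory (Monoid.CoprodI C) (Monoid.CoprodI C ⧸ H)) where
  quiverGenerators := ⟨fun p q =>
    {i : ULift.{w} ι // xg g i.down • p.back = q.back ∧
      idx (xg g i.down) (hm i.down) q.back ≠ 0}⟩
  of := fun e => ⟨xg g e.1.down, e.2.1⟩
  unique_lift := by
    intro X _X f
    -- the total labelling of all edges (junk value on omitted edges)
    let ℓ : ∀ i : ι, (Monoid.CoprodI C ⧸ H) → X := fun i a =>
      if h : idx (xg g i) (hm i) (xg g i • a) ≠ 0 then
        @f ⟨(), a⟩ ⟨(), xg g i • a⟩ ⟨ULift.up i, rfl, h⟩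
      else 1
    -- the potential functions
    let δ : ∀ i : ι, (Monoid.CoprodI C ⧸ H) → X := fun i =>
      delta (ℓ i) (xg g i) (hm i)
    -- the factor homomorphisms into the semidirect product
    let ψ : ∀ i : ι, C i →*
        ((Monoid.CoprodI C ⧸ H) → X) ⋊[mulAutArrow] Monoid.CoprodI C := fun i =>
      cbd Monoid.CoprodI.of (δ i)
    let F' := Monoid.CoprodI.lift ψ
    have hF' : ∀ i (c : C i), F' (Monoid.CoprodI.of c) = ψ i c := fun i c =>
      Monoid.CoprodI.lift_of ψ c
    have hδ : ∀ (i : ι) (a : Monoid.CoprodI C ⧸ H)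
        (h : idx (xg g i) (hm i) (xg g i • a) ≠ 0),
        δ i (xg g i • a) = ℓ i a * δ i a := fun i a h =>
      delta_smul (ℓ i) (xg g i) (hm i) (hfree i) h
    have hℓ : ∀ (i : ι) (a : Monoid.CoprodI C ⧸ H)
        (h : idx (xg g i) (hm i) (xg g i • a) ≠ 0),
        ℓ i a = @f ⟨(), a⟩ ⟨(), xg g i • a⟩ ⟨ULift.up i, rfl, h⟩ := fun i a h =>
      dif_pos h
    -- congruence for the labelling in the target
    have fcong : ∀ (p : ActionCategory (Monoid.CoprodI C) (Monoid.CoprodI C ⧸ H))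
        (b b' : Monoid.CoprodI C ⧸ H) (hb : b = b')
        (e : {j : ULift.{w} ι // xg g j.down • p.back = b ∧
              idx (xg g j.down) (hm j.down) b ≠ 0})
        (e' : {j : ULift.{w} ι // xg g j.down • p.back = b' ∧
              idx (xg g j.down) (hm j.down) b' ≠ 0}),
        e.1 = e'.1 → @f p ⟨(), b⟩ e = @f p ⟨(), b'⟩ e' := by
      rintro p b _ rfl e e' h
      exact congrArg (@f p ⟨(), b⟩) (Subtype.ext h)
    have sane : ∀ u, (F' u).right = u := by
      have : SemidirectProduct.rightHom.comp F' = MonoidHom.id _ :=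
        Monoid.CoprodI.ext_hom _ _ (fun i => by
          ext c
          simp [F', ψ, Monoid.CoprodI.lift_of])
      exact fun u => DFunLike.ext_iff.mp this u
    refine ⟨uncurry F' sane, ?_, ?_⟩
    · rintro ⟨⟨⟩, (a : Monoid.CoprodI C ⧸ H)⟩ ⟨⟨⟩, (b : Monoid.CoprodI C ⧸ H)⟩
        ⟨⟨i⟩, (h1 : xg g i • a = b), h2⟩
      subst h1
      change idx (xg g i) (hm i) (xg g i • a) ≠ 0 at h2
      show (F' (Monoid.CoprodI.of (g i))).left (xg g i • a) = _
      rw [hF' i (g i)]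
      show δ i (xg g i • a) * (δ i ((xg g i)⁻¹ • (xg g i • a)))⁻¹ = _
      rw [inv_smul_smul, hδ i a h2, mul_inv_cancel_right, hℓ i a h2]
    · intro E hE
      -- `curry E` agrees with `F'`, by comparison on each generator
      have key : curry E = F' := by
        refine Monoid.CoprodI.ext_hom _ _ (fun i => ?_)
        refine hom_eq_of_generator (hgen i) ?_
        rw [MonoidHom.comp_apply, MonoidHom.comp_apply, hF' i (g i)]
        have hu : curry E (Monoid.CoprodI.of (g i))
            = ⟨fun b => E.map (homOfPair b (xg g i)), xg g i⟩ := rfl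
        have hv : ψ i (g i)
            = ⟨fun b => δ i b * (δ i ((xg g i)⁻¹ • b))⁻¹, xg g i⟩ := rfl
        have huv : ∀ b, idx (xg g i) (hm i) b ≠ 0 →
            E.map (homOfPair b (xg g i)) = δ i b * (δ i ((xg g i)⁻¹ • b))⁻¹ := by
          intro b hb
          have hsm : xg g i • ((xg g i)⁻¹ • b) = b := smul_inv_smul _ _
          have ha : idx (xg g i) (hm i) (xg g i • ((xg g i)⁻¹ • b)) ≠ 0 := by
            rwa [hsm]
          have he : E.map (homOfPair b (xg g i))
              = @f ⟨(), (xg g i)⁻¹ • b⟩ ⟨(), b⟩ ⟨ULift.up i, hsm, hb⟩ :=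
            hE (a := ⟨(), (xg g i)⁻¹ • b⟩) (b := ⟨(), b⟩) ⟨ULift.up i, hsm, hb⟩
          have h2 : δ i b = ℓ i ((xg g i)⁻¹ • b) * δ i ((xg g i)⁻¹ • b) := by
            conv_lhs => rw [← hsm]
            exact hδ i _ ha
          rw [he, h2, mul_inv_cancel_right, hℓ i _ ha]
          exact fcong (show ActionCategory (Monoid.CoprodI C) (Monoid.CoprodI C ⧸ H)
              from ⟨(), (xg g i)⁻¹ • b⟩) b (xg g i • ((xg g i)⁻¹ • b)) hsm.symm
            ⟨ULift.up i, hsm, hb⟩ ⟨ULift.up i, rfl, ha⟩ rfl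
        have hL : (fun b => E.map (homOfPair b (xg g i)))
            = fun b => δ i b * (δ i ((xg g i)⁻¹ • b))⁻¹ := by
          funext b
          by_cases hb : idx (xg g i) (hm i) b ≠ 0
          · exact huv b hb
          · push_neg at hb
            have hc : (Monoid.CoprodI.of (g i) : Monoid.CoprodI C)
                ^ orderOf (xg g i) = 1 :=
              (map_pow Monoid.CoprodI.of (g i) _).symm.trans
                (by rw [hord i, map_one])
            refine left_eq_of_pow _ _ (xg g i) (hm i) (hfree i) b hb huv ?_ ?_
            · rw [← pow_left_eq, ← hu]
              rw [show ((curry E) (Monoid.CoprodI.of (g i)))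
                    ^ (orderOf (xg g i)) = 1 from
                (map_pow (curry E) _ _).symm.trans (by rw [hc, map_one])]
              rfl
            · rw [← pow_left_eq, ← hv]
              rw [show ((ψ i) (g i)) ^ (orderOf (xg g i)) = 1 from
                (map_pow (ψ i) _ _).symm.trans (by rw [hord i, map_one])]
              rfl
        rw [hu, hv, hL]
      apply CategoryTheory.Functor.hext
      · intro p
        apply Unit.ext
      · refine ActionCategory.cases ?_
        intro t u
        apply heq_of_eq
        show E.map (homOfPair t u) = (F' u).left t
        rw [← key]
        rfl

end main

end KuroshAux

/-- Every torsion-free subgroup of a free product of finite cyclic groups is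
free. -/
theorem stmt_13 {ι : Type*} (C : ι → Type*) [∀ i, Group (C i)]
    [∀ i, Finite (C i)] (hcyc : ∀ i, IsCyclic (C i))
    (H : Subgroup (Monoid.CoprodI C))
    (htf : ∀ h ∈ H, IsOfFinOrder h → h = 1) :
    IsFreeGroup H := by
  classical
  let g : ∀ i, C i := fun i => ((hcyc i).exists_generator).choose
  have hgen : ∀ i (c : C i), c ∈ Subgroup.zpowers (g i) := fun i =>
    ((hcyc i).exists_generator).choose_spec
  have hordx : ∀ i, orderOf (KuroshAux.xg g i) = orderOf (g i) := fun i =>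
    orderOf_injective _ (Monoid.CoprodI.of_injective i) (g i)
  have hm : ∀ i, 0 < orderOf (KuroshAux.xg g i) := fun i => by
    rw [hordx i]
    exact orderOf_pos (g i)
  have hord : ∀ i, g i ^ orderOf (KuroshAux.xg g i) = 1 := fun i => by
    rw [hordx i]
    exact pow_orderOf_eq_one (g i)
  have hfree : ∀ i (k : ℕ) (a : Monoid.CoprodI C ⧸ H),
      KuroshAux.xg g i ^ k • a = a → orderOf (KuroshAux.xg g i) ∣ k := by
    intro i k a
    obtain ⟨y, rfl⟩ := QuotientGroup.mk_surjective a
    intro ha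
    rw [MulAction.Quotient.smul_mk] at ha
    have hH : (KuroshAux.xg g i ^ k • y)⁻¹ * y ∈ H := QuotientGroup.eq.mp ha
    have hfin : IsOfFinOrder (KuroshAux.xg g i ^ k) :=
      (orderOf_pos_iff.mp (hm i)).pow
    have hconj : (KuroshAux.xg g i ^ k • y)⁻¹ * y
        = (MulAut.conj y⁻¹) ((KuroshAux.xg g i ^ k)⁻¹) := by
      show (KuroshAux.xg g i ^ k * y)⁻¹ * y = _
      rw [MulAut.conj_apply]
      group
    have hfo : IsOfFinOrder ((KuroshAux.xg g i ^ k • y)⁻¹ * y) := by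
      rw [hconj]
      exact (MulAut.conj y⁻¹).toMonoidHom.isOfFinOrder hfin.inv
    have h1 : (KuroshAux.xg g i ^ k • y)⁻¹ * y = 1 := htf _ hH hfo
    have h2 : KuroshAux.xg g i ^ k = 1 := by
      have h3 : (KuroshAux.xg g i ^ k * y) = y := by
        rw [inv_mul_eq_one] at h1
        exact h1
      exact mul_right_cancel (by rwa [one_mul])
    exact orderOf_dvd_of_pow_eq_one h2
  haveI := KuroshAux.freeGroupoidOfTorsionFree g H hm hfree hgen hord
  letI : Group (CategoryTheory.End ((CategoryTheory.ActionCategory.objEquiv (Monoid.CoprodI C) (Monoid.CoprodI C ⧸ H)) ↑(1 : Monoid.CoprodI C))) :=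
    CategoryTheory.End.group _
  have t1 : MulAction.IsPretransitive (Monoid.CoprodI C) (Monoid.CoprodI C ⧸ H) := inferInstance
  have t2 : Nonempty (Monoid.CoprodI C ⧸ H) := inferInstance
  have t3 : CategoryTheory.IsConnected (CategoryTheory.ActionCategory (Monoid.CoprodI C) (Monoid.CoprodI C ⧸ H)) := inferInstance
  have t4 := @IsFreeGroupoid.endIsFreeOfConnectedFree _ _ (by exact t3) _ ((CategoryTheory.ActionCategory.objEquiv (Monoid.CoprodI C) (Monoid.CoprodI C ⧸ H)) ↑(1 : Monoid.CoprodI C))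
  exact @IsFreeGroup.ofMulEquiv _ _ t4 _ _ (CategoryTheory.ActionCategory.endMulEquivSubgroup H)
end

section
/- Let G be a group with a normal subgroup N such that N is a free product of finite cyclic groups and G/N is locally indicable. Then every torsion-free subgroup of G is locally indicable. -/
namespace Stmt14Aux
open SimpleGraph Monoid
set_option linter.unusedSectionVars false
section


variable {V : Type*} [DecidableEq V] {G : SimpleGraph V}

/-- Sum of an (antisymmetric) dart weight over a walk. -/
def csum (c : G.Dart → ℤ) {u v : V} (p : G.Walk u v) : ℤ := (p.darts.map c).sum

@[simp] lemma csum_nil (c : G.Dart → ℤ) {u : V} : csum c (Walk.nil : G.Walk u u) = 0 := rfl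

lemma csum_cons (c : G.Dart → ℤ) {u v w : V} (h : G.Adj u v) (p : G.Walk v w) :
    csum c (Walk.cons h p) = c ⟨(u, v), h⟩ + csum c p := by
  simp [csum, Walk.darts_cons]

lemma csum_append (c : G.Dart → ℤ) {u v w : V} (p : G.Walk u v) (q : G.Walk v w) :
    csum c (p.append q) = csum c p + csum c q := by
  simp [csum, Walk.darts_append]

lemma csum_copy (c : G.Dart → ℤ) {u v u' v' : V} (p : G.Walk u v) (hu : u = u') (hv : v = v') :
    csum c (p.copy hu hv) = csum c p := by
  subst hu; subst hv; rfl

lemma csum_reverse (c : G.Dart → ℤ) (hc : ∀ d, c d.symm = -c d) {u v : V} (p : G.Walk u v) :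
    csum c p.reverse = -csum c p := by
  simp only [csum, Walk.darts_reverse, List.map_reverse, List.sum_reverse, List.map_map]
  have hfun : (c ∘ SimpleGraph.Dart.symm) = fun d => -c d := funext fun d => hc d
  rw [hfun]
  induction p.darts with
  | nil => simp
  | cons d l ih => simp only [List.map_cons, List.sum_cons, ih]; ring

/-- Path independence for antisymmetric dart-weights in an acyclic graph. -/
lemma csum_eq_csum_path (hT : G.IsAcyclic) (c : G.Dart → ℤ) (hc : ∀ d, c d.symm = -c d)
    {a b : V} (w : G.Walk a b) : ∀ (p : G.Walk a b), p.IsPath → csum c w = csum c p := by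
  induction w with
  | nil =>
    intro p hp
    have : p = Walk.nil := congrArg Subtype.val (hT.path_unique ⟨p, hp⟩ Path.nil)
    simp [this]
  | @cons a x b d w' ih =>
    intro p hp
    have hq : (w'.toPath : G.Walk x b).IsPath := (w'.toPath).2
    have h1 : csum c w' = csum c (w'.toPath : G.Walk x b) := ih _ hq
    rw [csum_cons, h1]
    set q : G.Walk x b := (w'.toPath : G.Walk x b) with hqdef
    by_cases hmem : a ∈ q.support
    · have ht : (q.takeUntil a hmem).IsPath := hq.takeUntil hmem
      have hd : (q.dropUntil a hmem).IsPath := hq.dropUntil hmem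
      have hdp : q.dropUntil a hmem = p :=
        congrArg Subtype.val (hT.path_unique ⟨q.dropUntil a hmem, hd⟩ ⟨p, hp⟩)
      have hsingle : (Walk.cons d (Walk.nil : G.Walk x x)) = (q.takeUntil a hmem).reverse := by
        have h1' : (Walk.cons d (Walk.nil : G.Walk x x) : G.Walk a x).IsPath := by
          simp [Walk.isPath_def, Walk.support_cons, d.ne]
        exact congrArg Subtype.val
          (hT.path_unique ⟨Walk.cons d Walk.nil, h1'⟩ ⟨(q.takeUntil a hmem).reverse, ht.reverse⟩)
      have hcd : c ⟨(a, x), d⟩ = - csum c (q.takeUntil a hmem) := by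
        have h2 := csum_reverse c hc (q.takeUntil a hmem)
        rw [← hsingle, csum_cons, csum_nil] at h2
        linarith
      calc c ⟨(a, x), d⟩ + csum c q
          = c ⟨(a, x), d⟩ + (csum c (q.takeUntil a hmem) + csum c (q.dropUntil a hmem)) := by
            rw [← csum_append, Walk.take_spec]
        _ = csum c p := by rw [hcd, hdp]; ring
    · have hcons : (Walk.cons d q).IsPath := hq.cons hmem
      have h2 : Walk.cons d q = p :=
        congrArg Subtype.val (hT.path_unique ⟨Walk.cons d q, hcons⟩ ⟨p, hp⟩)
      rw [← h2, csum_cons]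

lemma csum_walk_eq (hT : G.IsAcyclic) (c : G.Dart → ℤ) (hc : ∀ d, c d.symm = -c d)
    {a b : V} (w₁ w₂ : G.Walk a b) : csum c w₁ = csum c w₂ := by
  rw [csum_eq_csum_path hT c hc w₁ (w₂.toPath : G.Walk a b) (w₂.toPath).2,
    csum_eq_csum_path hT c hc w₂ (w₂.toPath : G.Walk a b) (w₂.toPath).2]

lemma path_length_eq (hT : G.IsAcyclic) {a b : V} (p q : G.Walk a b)
    (hp : p.IsPath) (hq : q.IsPath) : p.length = q.length := by
  rw [show p = q from congrArg Subtype.val (hT.path_unique ⟨p, hp⟩ ⟨q, hq⟩)]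

end
section


variable {ι : Type*} (C : ι → Type*) [∀ i, Group (C i)]

def P (i : ι) : Subgroup (CoprodI C) := (CoprodI.of : C i →* CoprodI C).range

abbrev Vtx := (CoprodI C) ⊕ (Σ i : ι, (CoprodI C) ⧸ P C i)

def R : Vtx C → Vtx C → Prop
  | Sum.inl m, Sum.inr s => (QuotientGroup.mk m : CoprodI C ⧸ P C s.1) = s.2
  | _, _ => False

def T : SimpleGraph (Vtx C) where
  Adj u v := R C u v ∨ R C v u
  symm := ⟨fun u v h => h.symm⟩
  loopless := ⟨by rintro u (h | h) <;> (cases u <;> simp [R] at h)⟩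

lemma adj_inl_inr {m : CoprodI C} {i : ι} {x : (CoprodI C) ⧸ P C i} :
    (T C).Adj (Sum.inl m) (Sum.inr ⟨i, x⟩) ↔ (QuotientGroup.mk m : CoprodI C ⧸ P C i) = x := by
  show R C _ _ ∨ R C _ _ ↔ _
  simp [R]

lemma not_adj_inl_inl {m m' : CoprodI C} : ¬ (T C).Adj (Sum.inl m) (Sum.inl m') := by
  rintro (h | h) <;> simp [R] at h

lemma not_adj_inr_inr {s s' : Σ i : ι, (CoprodI C) ⧸ P C i} :
    ¬ (T C).Adj (Sum.inr s) (Sum.inr s') := by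
  rintro (h | h) <;> simp [R] at h

def vact (g : CoprodI C) : Vtx C → Vtx C
  | Sum.inl m => Sum.inl (g * m)
  | Sum.inr ⟨i, x⟩ => Sum.inr ⟨i, g • x⟩

lemma vact_one (v : Vtx C) : vact C 1 v = v := by
  rcases v with m | ⟨i, x⟩ <;> simp [vact]

lemma vact_mul (g h : CoprodI C) (v : Vtx C) : vact C (g * h) v = vact C g (vact C h v) := by
  rcases v with m | ⟨i, x⟩ <;> simp [vact, mul_assoc, mul_smul]

lemma vact_adj (g : CoprodI C) {u v : Vtx C} (h : (T C).Adj u v) :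
    (T C).Adj (vact C g u) (vact C g v) := by
  have key : ∀ u v, R C u v → R C (vact C g u) (vact C g v) := by
    rintro (m | s) (m' | ⟨i, x⟩) h <;> simp [R] at h ⊢
    rw [← h]
    rfl
  rcases h with h | h
  · exact Or.inl (key _ _ h)
  · exact Or.inr (key _ _ h)

def tact (g : CoprodI C) : T C →g T C where
  toFun := vact C g
  map_rel' := vact_adj C g

/-! ### Connectivity -/

lemma reach_inl (m : CoprodI C) : (T C).Reachable (Sum.inl 1) (Sum.inl m) := by
  induction m using CoprodI.induction_on with
  | one => exact Reachable.refl _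
  | of i x =>
    have h1 : (T C).Adj (Sum.inl (1 : CoprodI C))
        (Sum.inr ⟨i, (QuotientGroup.mk 1 : CoprodI C ⧸ P C i)⟩) := (adj_inl_inr C).mpr rfl
    have h2 : (T C).Adj (Sum.inl (CoprodI.of x))
        (Sum.inr ⟨i, (QuotientGroup.mk 1 : CoprodI C ⧸ P C i)⟩) := by
      rw [adj_inl_inr]
      show (QuotientGroup.mk (CoprodI.of x) : CoprodI C ⧸ P C i) = QuotientGroup.mk 1
      rw [QuotientGroup.eq]
      exact ⟨x⁻¹, by simp⟩
    exact h1.reachable.trans h2.reachable.symm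
  | mul x y hx hy =>
    have h2 := hy.map (tact C x)
    have e1 : (tact C x) (Sum.inl (1 : CoprodI C)) = Sum.inl x := by
      show Sum.inl (x * 1) = _
      rw [mul_one]
    have e2 : (tact C x) (Sum.inl y) = Sum.inl (x * y) := rfl
    rw [e1, e2] at h2
    exact hx.trans h2

lemma reach_all (u v : Vtx C) : (T C).Reachable u v := by
  have key : ∀ v : Vtx C, (T C).Reachable (Sum.inl 1) v := by
    rintro (m | ⟨i, x⟩)
    · exact reach_inl C m
    · obtain ⟨m, rfl⟩ := QuotientGroup.mk_surjective x
      exact (reach_inl C m).trans ((adj_inl_inr C).mpr rfl).reachable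
  exact (key u).symm.trans (key v)

/-! ### Acyclicity -/

lemma eq_of_length_zero {V : Type*} {G : SimpleGraph V} {u v : V} (q : G.Walk u v)
    (h : q.length = 0) : u = v := by
  cases q with
  | nil => rfl
  | cons _ q => simp at h

lemma extract (n : ℕ) : ∀ {a b : CoprodI C} (w : (T C).Walk (Sum.inl a) (Sum.inl b)),
    w.length = n → w.IsPath →
    ∃ L : List (Σ i, C i), (∀ l ∈ L, l.2 ≠ 1) ∧ (L.Chain' fun l l' => l.1 ≠ l'.1) ∧
      ((L.map fun l => CoprodI.of l.2).prod = a⁻¹ * b) ∧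
      (∀ hL : L ≠ [], (Sum.inr ⟨(L.head hL).1,
        (QuotientGroup.mk a : CoprodI C ⧸ P C (L.head hL).1)⟩ : Vtx C) ∈ w.support) := by
  induction n using Nat.strong_induction_on with
  | _ n ih =>
    intro a b w hlen hw
    by_cases hn : w.length = 0
    · have hab : a = b := Sum.inl.inj (eq_of_length_zero w hn)
      exact ⟨[], by simp, List.isChain_nil, by simp [hab], by simp⟩
    · have hnn : ¬ w.Nil := by
        rw [Walk.nil_iff_length_eq]; exact hn
      obtain ⟨z, h, w', rfl⟩ := Walk.not_nil_iff.mp hnn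
      rcases z with m | ⟨i, x⟩
      · exact absurd h (not_adj_inl_inl C)
      have hn' : ¬ w'.Nil := by
        intro hnil
        rw [Walk.nil_iff_length_eq] at hnil
        exact (by simpa using (eq_of_length_zero w' hnil) : False)
      obtain ⟨z2, h2, w2, rfl⟩ := Walk.not_nil_iff.mp hn'
      rcases z2 with a' | s2
      swap
      · exact absurd h2 (not_adj_inr_inr C)
      -- adjacency facts
      have hx1 : (QuotientGroup.mk a : CoprodI C ⧸ P C i) = x := (adj_inl_inr C).mp h
      have hx2 : (QuotientGroup.mk a' : CoprodI C ⧸ P C i) = x :=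
        (adj_inl_inr C).mp (h2.symm)
      have hmem : a⁻¹ * a' ∈ P C i := QuotientGroup.eq.mp (hx1.trans hx2.symm)
      obtain ⟨cc, hcc⟩ := hmem
      have hane : a ≠ a' := by
        intro hEq
        subst hEq
        have hmm : (Sum.inl a : Vtx C) ∈ w2.support := w2.start_mem_support
        have hnd := hw.support_nodup
        simp only [Walk.support_cons, List.nodup_cons] at hnd
        exact hnd.1 (by simp [hmm])
      have hccne : cc ≠ 1 := by
        rintro rfl
        rw [map_one] at hcc
        exact hane (by rwa [eq_comm, inv_mul_eq_one] at hcc)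
      have hlen2 : w2.length = n - 2 := by
        simp only [Walk.length_cons] at hlen
        omega
      have hlt : n - 2 < n := by omega
      have hw2 : w2.IsPath := hw.of_cons.of_cons
      obtain ⟨L₂, hne₂, hch₂, hprod₂, hhead₂⟩ := ih _ hlt w2 hlen2 hw2
      refine ⟨⟨i, cc⟩ :: L₂, ?_, ?_, ?_, ?_⟩
      · intro l hl
        rcases List.mem_cons.mp hl with h' | h'
        · rw [h']; exact hccne
        · exact hne₂ l h'
      · rw [List.Chain', List.isChain_cons]
        refine ⟨?_, hch₂⟩
        intro l' hl'
        rcases L₂ with _ | ⟨l₀, L₂'⟩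
        · simp at hl'
        simp only [List.head?_cons, Option.mem_some_iff] at hl'
        subst hl'
        show i ≠ l₀.1
        intro hEq
        have hy := hhead₂ (by simp)
        simp only [List.head_cons] at hy
        rw [← hEq] at hy
        rw [hx2] at hy
        have hnd := hw.of_cons.support_nodup
        simp only [Walk.support_cons, List.nodup_cons] at hnd
        exact hnd.1 hy
      · simp only [List.map_cons, List.prod_cons, hprod₂, hcc]
        group
      · intro hL
        simp only [List.head_cons]
        rw [hx1]
        simp [Walk.support_cons]

lemma no_cycle_at_inl (a : CoprodI C) (p : (T C).Walk (Sum.inl a) (Sum.inl a))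
    (hp : p.IsCycle) : False := by
  classical
  have h3 := hp.three_le_length
  obtain ⟨z, h, w', rfl⟩ := Walk.not_nil_iff.mp hp.not_nil
  rcases z with m | ⟨i, x⟩
  · exact (not_adj_inl_inl C) h
  have hw' : w'.IsPath := by
    apply Walk.IsPath.mk'
    simpa [Walk.support_cons] using hp.support_nodup
  have hn' : ¬ w'.Nil := by
    intro hnil
    rw [Walk.nil_iff_length_eq] at hnil
    have := eq_of_length_zero w' hnil
    simp at this
  obtain ⟨z2, h2, w2, rfl⟩ := Walk.not_nil_iff.mp hn'
  rcases z2 with a₁ | s2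
  swap
  · exact (not_adj_inr_inr C) h2
  have hw2 : w2.IsPath := hw'.of_cons
  have hx1 : (QuotientGroup.mk a : CoprodI C ⧸ P C i) = x := (adj_inl_inr C).mp h
  have hx2 : (QuotientGroup.mk a₁ : CoprodI C ⧸ P C i) = x :=
    (adj_inl_inr C).mp (h2.symm)
  obtain ⟨cc, hcc⟩ := QuotientGroup.eq.mp (hx1.trans hx2.symm)
  have hane : a ≠ a₁ := by
    intro hEq
    subst hEq
    by_cases hnil2 : w2.Nil
    · rw [Walk.nil_iff_length_eq] at hnil2
      simp [Walk.length_cons, hnil2] at h3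
    · obtain ⟨z3, h4, w4, rfl⟩ := Walk.not_nil_iff.mp hnil2
      have hmem : (Sum.inl a : Vtx C) ∈ w4.support := w4.end_mem_support
      have hnd := hw2.support_nodup
      simp only [Walk.support_cons, List.nodup_cons] at hnd
      exact hnd.1 hmem
  have hccne : cc ≠ 1 := by
    rintro rfl
    rw [map_one] at hcc
    exact hane (by rwa [eq_comm, inv_mul_eq_one] at hcc)
  obtain ⟨L₂, hne₂, hch₂, hprod₂, hhead₂⟩ := extract C w2.length w2 rfl hw2
  have hch : (⟨i, cc⟩ :: L₂ : List (Σ i, C i)).Chain' (fun l l' => l.1 ≠ l'.1) := by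
    rw [List.Chain', List.isChain_cons]
    refine ⟨?_, hch₂⟩
    intro l' hl'
    rcases L₂ with _ | ⟨l₀, L₂'⟩
    · simp at hl'
    simp only [List.head?_cons, Option.mem_some_iff] at hl'
    subst hl'
    show i ≠ l₀.1
    intro hEq
    have hy := hhead₂ (by simp)
    simp only [List.head_cons] at hy
    rw [← hEq] at hy
    rw [hx2] at hy
    have hnd := hw'.support_nodup
    simp only [Walk.support_cons, List.nodup_cons] at hnd
    exact hnd.1 hy
  have hne : ∀ l ∈ (⟨i, cc⟩ :: L₂ : List (Σ i, C i)), l.2 ≠ 1 := by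
    intro l hl
    rcases List.mem_cons.mp hl with h' | h'
    · rw [h']; exact hccne
    · exact hne₂ l h'
  have hprod : ((⟨i, cc⟩ :: L₂ : List (Σ i, C i)).map fun l => CoprodI.of l.2).prod = 1 := by
    simp only [List.map_cons, List.prod_cons, hprod₂, hcc]
    group
  let W : CoprodI.Word C := ⟨⟨i, cc⟩ :: L₂, hne, hch⟩
  have hWprod : W.prod = (CoprodI.Word.empty : CoprodI.Word C).prod := by
    rw [CoprodI.Word.prod_empty]
    exact hprod
  have hWempty : W = CoprodI.Word.empty := by
    have hinj : Function.Injective (CoprodI.Word.prod : CoprodI.Word C → CoprodI C) := by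
      have : (CoprodI.Word.prod : CoprodI.Word C → CoprodI C)
          = ⇑(CoprodI.Word.equiv (M := C)).symm := rfl
      rw [this]
      exact (CoprodI.Word.equiv (M := C)).symm.injective
    exact hinj hWprod
  have : (⟨i, cc⟩ :: L₂ : List (Σ i, C i)) = [] := congrArg CoprodI.Word.toList hWempty
  simp at this

lemma isAcyclic : (T C).IsAcyclic := by
  classical
  intro v p hp
  rcases v with a | s
  · exact no_cycle_at_inl C a p hp
  · obtain ⟨z, h, w', rfl⟩ := Walk.not_nil_iff.mp hp.not_nil
    rcases z with a | s2
    swap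
    · exact (not_adj_inr_inr C) h
    have hz : (Sum.inl a : Vtx C) ∈ (Walk.cons h w').support := by
      simp [Walk.support_cons, w'.start_mem_support]
    exact no_cycle_at_inl C a _ (hp.rotate hz)

end
section


/-- Upgrade a nontrivial hom to `ℤ` to a surjective one. -/
lemma exists_surj_of_ne_one {A : Type*} [Group A] (φ : A →* Multiplicative ℤ) (a : A)
    (ha : φ a ≠ 1) : ∃ ψ : A →* Multiplicative ℤ, Function.Surjective ψ := by
  classical
  let Rg : AddSubgroup ℤ :=
    { carrier := Set.range fun x => Multiplicative.toAdd (φ x)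
      zero_mem' := ⟨1, by simp⟩
      add_mem' := by
        rintro _ _ ⟨x, rfl⟩ ⟨y, rfl⟩
        exact ⟨x * y, by simp⟩
      neg_mem' := by
        rintro _ ⟨x, rfl⟩
        exact ⟨x⁻¹, by simp⟩ }
  obtain ⟨g, hg⟩ := Int.subgroup_cyclic Rg
  have hmem : ∀ x : A, ∃ m : ℤ, Multiplicative.toAdd (φ x) = m * g := by
    intro x
    have hx : Multiplicative.toAdd (φ x) ∈ Rg := ⟨x, rfl⟩
    rw [hg, AddSubgroup.mem_closure_singleton] at hx
    obtain ⟨m, hm⟩ := hx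
    exact ⟨m, by rw [← hm]; simp [smul_eq_mul]⟩
  have hgne : g ≠ 0 := by
    rintro rfl
    obtain ⟨m, hm⟩ := hmem a
    simp only [mul_zero] at hm
    exact ha (by
      have : φ a = Multiplicative.ofAdd 0 := by
        rw [← hm]; simp
      simpa using this)
  refine ⟨MonoidHom.mk' (fun x => Multiplicative.ofAdd (Multiplicative.toAdd (φ x) / g)) ?_, ?_⟩
  · intro x y
    obtain ⟨mx, hx⟩ := hmem x
    obtain ⟨my, hy⟩ := hmem y
    have hxy : Multiplicative.toAdd (φ (x * y)) = (mx + my) * g := by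
      rw [map_mul, toAdd_mul, hx, hy]; ring
    rw [hxy, hx, hy, Int.mul_ediv_cancel _ hgne, Int.mul_ediv_cancel _ hgne,
      Int.mul_ediv_cancel _ hgne, ← ofAdd_add]
  · have hgmem : g ∈ Rg := by
      rw [hg]
      exact AddSubgroup.mem_closure_singleton.mpr ⟨1, one_smul _ _⟩
    obtain ⟨x₀, hx₀⟩ := hgmem
    dsimp only at hx₀
    intro y
    refine ⟨x₀ ^ Multiplicative.toAdd y, ?_⟩
    show Multiplicative.ofAdd (Multiplicative.toAdd (φ (x₀ ^ Multiplicative.toAdd y)) / g) = y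
    rw [map_zpow]
    have : Multiplicative.toAdd ((φ x₀) ^ Multiplicative.toAdd y)
        = Multiplicative.toAdd y * g := by
      rw [toAdd_zpow, hx₀, smul_eq_mul]
    rw [this, Int.mul_ediv_cancel _ hgne]
    simp

end

section
open Classical
variable {ι : Type*} (C : ι → Type*) [∀ i, Group (C i)]

/-- Translation action on darts. -/
def dact (g : CoprodI C) (d : (T C).Dart) : (T C).Dart :=
  ⟨(vact C g d.toProd.1, vact C g d.toProd.2), vact_adj C g d.adj⟩

lemma dact_one (d : (T C).Dart) : dact C 1 d = d := by
  apply SimpleGraph.Dart.ext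
  show (vact C 1 d.toProd.1, vact C 1 d.toProd.2) = d.toProd
  rw [vact_one, vact_one]

lemma dact_mul (g h : CoprodI C) (d : (T C).Dart) :
    dact C (g * h) d = dact C g (dact C h d) := by
  apply SimpleGraph.Dart.ext
  show (vact C (g * h) d.toProd.1, vact C (g * h) d.toProd.2) = _
  rw [vact_mul, vact_mul]
  rfl

lemma dact_symm (g : CoprodI C) (d : (T C).Dart) :
    (dact C g d).symm = dact C g d.symm := by
  apply SimpleGraph.Dart.ext
  rfl

lemma mapDart_tact (g : CoprodI C) (d : (T C).Dart) :
    (tact C g).mapDart d = dact C g d := by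
  apply SimpleGraph.Dart.ext
  rfl

lemma isOfFinOrder_of_vact_fixed [∀ i, Finite (C i)] {g : CoprodI C} {v : Vtx C}
    (h : vact C g v = v) : IsOfFinOrder g := by
  rcases v with m | ⟨i, x⟩
  · have h1 : g * m = m := Sum.inl.inj h
    have h2 : g = 1 := by
      have h3 : g * m = 1 * m := by rw [h1, one_mul]
      exact mul_right_cancel h3
    rw [h2]
    exact IsOfFinOrder.one
  · obtain ⟨m, rfl⟩ := QuotientGroup.mk_surjective x
    have hx : (QuotientGroup.mk (g * m) : CoprodI C ⧸ P C i) = QuotientGroup.mk m := by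
      simp only [vact] at h
      have h2 := Sum.inr.inj h
      simpa using h2
    obtain ⟨cc, hcc⟩ := QuotientGroup.eq.mp hx
    have h1 : IsOfFinOrder ((g * m)⁻¹ * m) := by
      rw [← hcc]
      exact (CoprodI.of : C i →* CoprodI C).isOfFinOrder (isOfFinOrder_of_finite cc)
    have h2 := ((MulAut.conj m).toMonoidHom : CoprodI C →* CoprodI C).isOfFinOrder h1
    have h3 : (MulAut.conj m).toMonoidHom ((g * m)⁻¹ * m) = g⁻¹ := by
      show m * ((g * m)⁻¹ * m) * m⁻¹ = g⁻¹
      group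
    rw [h3] at h2
    rwa [isOfFinOrder_inv_iff] at h2

variable {v₀ w₁ : Vtx C} (hadj₁ : (T C).Adj v₀ w₁) (K' : Subgroup (CoprodI C))

/-- The orbit of the base dart. -/
def Od : Set ((T C).Dart) := {d | ∃ g ∈ K', dact C g ⟨(v₀, w₁), hadj₁⟩ = d}

/-- Indicator of the orbit. -/
noncomputable def ew (d : (T C).Dart) : ℤ := if d ∈ Od C hadj₁ K' then 1 else 0

/-- The antisymmetrized indicator. -/
noncomputable def cw (d : (T C).Dart) : ℤ := ew C hadj₁ K' d - ew C hadj₁ K' d.symm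

lemma cw_symm (d : (T C).Dart) : cw C hadj₁ K' d.symm = - cw C hadj₁ K' d := by
  unfold cw
  rw [SimpleGraph.Dart.symm_symm]
  ring

lemma Od_smul {g : CoprodI C} (hg : g ∈ K') (d : (T C).Dart) :
    dact C g d ∈ Od C hadj₁ K' ↔ d ∈ Od C hadj₁ K' := by
  constructor
  · rintro ⟨g', hg', hgd⟩
    refine ⟨g⁻¹ * g', mul_mem (inv_mem hg) hg', ?_⟩
    rw [dact_mul, hgd, ← dact_mul, inv_mul_cancel, dact_one]
  · rintro ⟨g', hg', hgd⟩
    exact ⟨g * g', mul_mem hg hg', by rw [dact_mul, hgd]⟩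

lemma ew_smul {g : CoprodI C} (hg : g ∈ K') (d : (T C).Dart) :
    ew C hadj₁ K' (dact C g d) = ew C hadj₁ K' d := by
  unfold ew
  exact if_congr (Od_smul C hadj₁ K' hg d) rfl rfl

lemma cw_smul {g : CoprodI C} (hg : g ∈ K') (d : (T C).Dart) :
    cw C hadj₁ K' (dact C g d) = cw C hadj₁ K' d := by
  unfold cw
  rw [dact_symm, ew_smul C hadj₁ K' hg, ew_smul C hadj₁ K' hg]

lemma csum_map_tact {g : CoprodI C} (hg : g ∈ K') {u v : Vtx C} (q : (T C).Walk u v) :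
    csum (cw C hadj₁ K') (q.map (tact C g)) = csum (cw C hadj₁ K') q := by
  show ((q.map (tact C g)).darts.map _).sum = _
  rw [SimpleGraph.Walk.darts_map, List.map_map]
  congr 1
  apply List.map_congr_left
  intro d _
  show cw C hadj₁ K' ((tact C g).mapDart d) = cw C hadj₁ K' d
  rw [mapDart_tact, cw_smul C hadj₁ K' hg]

/-- A choice of path between any two vertices. -/
noncomputable def geo (u v : Vtx C) : (T C).Walk u v :=
  ((reach_all C u v).some.toPath : (T C).Path u v).1

lemma geo_isPath (u v : Vtx C) : (geo C u v).IsPath := ((reach_all C u v).some.toPath).2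

/-- The displacement cocycle. -/
noncomputable def FF (g : ↥K') : ℤ :=
  csum (cw C hadj₁ K') (geo C v₀ (vact C (↑g) v₀))

lemma FF_mul (g h : ↥K') :
    FF C hadj₁ K' (g * h) = FF C hadj₁ K' g + FF C hadj₁ K' h := by
  have hcopy : vact C (↑g) (vact C (↑h) v₀) = vact C (↑(g * h) : CoprodI C) v₀ :=
    (vact_mul C _ _ v₀).symm
  have h1 : FF C hadj₁ K' (g * h) = csum (cw C hadj₁ K')
      ((geo C v₀ (vact C (↑g) v₀)).append
        (((geo C v₀ (vact C (↑h) v₀)).map (tact C ↑g)).copy rfl hcopy)) :=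
    csum_walk_eq (isAcyclic C) _ (cw_symm C hadj₁ K') _ _
  rw [h1, csum_append]
  erw [csum_copy]
  rw [csum_map_tact C hadj₁ K' g.2]
  rfl

end

section
variable {ι : Type*} (C : ι → Type*) [∀ i, Group (C i)] [∀ i, Finite (C i)]

theorem freeprod_main (K' : Subgroup (CoprodI C))
    (htf : ∀ g ∈ K', IsOfFinOrder g → g = 1) (hne : K' ≠ ⊥) :
    ∃ φ : ↥K' →* Multiplicative ℤ, Function.Surjective φ := by
  classical
  have hT := isAcyclic C
  have hfree : ∀ g ∈ K', ∀ v : Vtx C, vact C g v = v → g = 1 :=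
    fun g hg v hv => htf g hg (isOfFinOrder_of_vact_fixed C hv)
  obtain ⟨k₀, hk₀K, hk₀⟩ := K'.bot_or_exists_ne_one.resolve_left hne
  have hdisp : ∃ n, ∃ g, g ∈ K' ∧ g ≠ 1 ∧
      ∃ (v : Vtx C) (q : (T C).Walk v (vact C g v)), q.IsPath ∧ q.length = n :=
    ⟨_, k₀, hk₀K, hk₀, Sum.inl 1, geo C _ _, geo_isPath C _ _, rfl⟩
  obtain ⟨k, hkK, hk1, v₀, p, hp, hplen⟩ := Nat.find_spec hdisp
  set n := Nat.find hdisp with hn_def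
  have hmin : ∀ g, g ∈ K' → g ≠ 1 →
      ∀ (v : Vtx C) (q : (T C).Walk v (vact C g v)), q.IsPath → n ≤ q.length :=
    fun g hg hg1 v q hq => Nat.find_min' hdisp ⟨g, hg, hg1, v, q, hq, rfl⟩
  have hn1 : 1 ≤ n := by
    rcases Nat.eq_zero_or_pos n with h0 | h
    · exfalso
      have hlen0 : p.length = 0 := by omega
      exact hk1 (hfree k hkK v₀ (eq_of_length_zero p hlen0).symm)
    · exact h
  have hpnn : ¬ p.Nil := by
    rw [SimpleGraph.Walk.nil_iff_length_eq]
    omega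
  obtain ⟨w₁, hadj₁, p₁, rfl⟩ := SimpleGraph.Walk.not_nil_iff.mp hpnn
  have hp₁ : p₁.IsPath := hp.of_cons
  have hlen₁ : p₁.length = n - 1 := by
    simp only [SimpleGraph.Walk.length_cons] at hplen
    omega
  -- abbreviations
  set O := Od C hadj₁ K' with hO
  set e := ew C hadj₁ K' with he
  set c := cw C hadj₁ K' with hc
  -- reversed darts of p are not in the orbit
  have hnotin : ∀ d ∈ (SimpleGraph.Walk.cons hadj₁ p₁).darts, d.symm ∉ O := by
    rintro d hd ⟨g, hgK, hgd⟩
    have hfst : vact C g v₀ = d.toProd.2 :=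
      congrArg (fun x : (T C).Dart => x.toProd.1) hgd
    have hsnd : vact C g w₁ = d.toProd.1 :=
      congrArg (fun x : (T C).Dart => x.toProd.2) hgd
    by_cases hg1 : g = 1
    · subst hg1
      rw [vact_one] at hfst
      have hmem2 : d.toProd.2 ∈ (SimpleGraph.Walk.cons hadj₁ p₁).support.tail := by
        rw [← SimpleGraph.Walk.map_snd_darts]
        exact List.mem_map_of_mem hd
      rw [← hfst] at hmem2
      have hnd := hp.support_nodup
      rw [SimpleGraph.Walk.support_cons] at hnd hmem2
      rw [List.nodup_cons] at hnd
      exact hnd.1 (by simpa using hmem2)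
    · have hdsnd_mem : d.toProd.2 ∈ (SimpleGraph.Walk.cons hadj₁ p₁).support :=
        SimpleGraph.Walk.dart_snd_mem_support_of_mem_darts _ hd
      rw [← hfst] at hdsnd_mem
      have htp : ((SimpleGraph.Walk.cons hadj₁ p₁).takeUntil _ hdsnd_mem).IsPath :=
        hp.takeUntil hdsnd_mem
      have hge : n ≤ ((SimpleGraph.Walk.cons hadj₁ p₁).takeUntil _ hdsnd_mem).length :=
        hmin g hgK hg1 v₀ _ htp
      have hsplit := congrArg SimpleGraph.Walk.length
        ((SimpleGraph.Walk.cons hadj₁ p₁).take_spec hdsnd_mem)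
      rw [SimpleGraph.Walk.length_append] at hsplit
      have hplen' : (SimpleGraph.Walk.cons hadj₁ p₁).length = n := hplen
      have hdrop0 : ((SimpleGraph.Walk.cons hadj₁ p₁).dropUntil _ hdsnd_mem).length = 0 := by
        omega
      have hend : vact C g v₀ = vact C k v₀ := eq_of_length_zero _ hdrop0
      have hgk : g = k := by
        have h5 : vact C (k⁻¹ * g) v₀ = v₀ := by
          rw [vact_mul, hend, ← vact_mul, inv_mul_cancel, vact_one]
        have h6 := hfree _ (mul_mem (inv_mem hkK) hgK) v₀ h5
        rw [inv_mul_eq_one] at h6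
        exact h6.symm
      subst hgk
      by_cases hdd : d = (⟨(v₀, w₁), hadj₁⟩ : (T C).Dart)
      · subst hdd
        have h6 : vact C (g * g) v₀ = v₀ := by
          rw [vact_mul]
          rw [show vact C g v₀ = w₁ from hfst]
          exact hsnd
        have h7 := hfree _ (mul_mem hgK hgK) v₀ h6
        exact hk1 (htf g hgK (isOfFinOrder_iff_pow_eq_one.mpr
          ⟨2, by norm_num, by rw [pow_two]; exact h7⟩))
      · have hd' : d ∈ p₁.darts := by
          rw [SimpleGraph.Walk.darts_cons] at hd
          rcases List.mem_cons.mp hd with h8 | h8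
          · exact absurd h8 hdd
          · exact h8
        have hfmem : d.toProd.1 ∈ p₁.support :=
          SimpleGraph.Walk.dart_fst_mem_support_of_mem_darts _ hd'
        rw [← hsnd] at hfmem
        have hrp : (p₁.takeUntil _ hfmem).IsPath := hp₁.takeUntil hfmem
        have h9 : n ≤ (p₁.takeUntil _ hfmem).length := hmin g hgK hk1 w₁ _ hrp
        have h10 := SimpleGraph.Walk.length_takeUntil_le p₁ hfmem
        omega
  -- value at k is at least 1
  have hFk : 1 ≤ FF C hadj₁ K' ⟨k, hkK⟩ := by
    have h1 : FF C hadj₁ K' ⟨k, hkK⟩ = csum c (SimpleGraph.Walk.cons hadj₁ p₁) :=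
      csum_walk_eq hT c (cw_symm C hadj₁ K') _ _
    rw [h1]
    have h2 : ∀ d ∈ (SimpleGraph.Walk.cons hadj₁ p₁).darts, c d = e d := by
      intro d hd
      show ew C hadj₁ K' d - ew C hadj₁ K' d.symm = e d
      rw [show ew C hadj₁ K' d.symm = 0 from if_neg (hnotin d hd)]
      rw [← he]
      ring
    show ((SimpleGraph.Walk.cons hadj₁ p₁).darts.map c).sum ≥ 1
    rw [List.map_congr_left h2]
    have hd₁O : (⟨(v₀, w₁), hadj₁⟩ : (T C).Dart) ∈ O := ⟨1, K'.one_mem, dact_one C _⟩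
    have h3 : e ⟨(v₀, w₁), hadj₁⟩ = 1 := if_pos hd₁O
    have h4 : e ⟨(v₀, w₁), hadj₁⟩ ∈ (SimpleGraph.Walk.cons hadj₁ p₁).darts.map e := by
      apply List.mem_map_of_mem
      rw [SimpleGraph.Walk.darts_cons]
      exact List.mem_cons_self
    have h5 : ∀ x ∈ (SimpleGraph.Walk.cons hadj₁ p₁).darts.map e, 0 ≤ x := by
      rintro x hx
      obtain ⟨d, _, rfl⟩ := List.mem_map.mp hx
      show (0 : ℤ) ≤ if d ∈ O then 1 else 0
      split <;> norm_num
    have h6 := List.single_le_sum h5 _ h4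
    rw [h3] at h6
    exact h6
  -- the homomorphism
  let φ : ↥K' →* Multiplicative ℤ :=
    MonoidHom.mk' (fun g => Multiplicative.ofAdd (FF C hadj₁ K' g)) (by
      intro a b
      rw [FF_mul]
      exact ofAdd_add _ _)
  have hφk : φ ⟨k, hkK⟩ ≠ 1 := by
    intro hcon
    have h7 : FF C hadj₁ K' ⟨k, hkK⟩ = 0 := by
      have := congrArg Multiplicative.toAdd hcon
      simpa [φ] using this
    omega
  exact exists_surj_of_ne_one φ _ hφk

end

end Stmt14Aux

/-- If `N ⊴ G` is a free product of finite cyclic groups and `G/N` is locally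
indicable, then every torsion-free subgroup of `G` is locally indicable. -/
theorem stmt_14 {G : Type*} [Group G] (N : Subgroup G) [N.Normal]
    {ι : Type*} (C : ι → Type*) [∀ i, Group (C i)] [∀ i, Finite (C i)]
    (hcyc : ∀ i, IsCyclic (C i)) (e : N ≃* Monoid.CoprodI C)
    (hquot : ∀ H : Subgroup (G ⧸ N), H.FG →
      H = ⊥ ∨ ∃ φ : H →* Multiplicative ℤ, Function.Surjective φ) :
    ∀ H : Subgroup G, (∀ h ∈ H, IsOfFinOrder h → h = 1) →
      ∀ K : Subgroup H, K.FG →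
        K = ⊥ ∨ ∃ φ : K →* Multiplicative ℤ, Function.Surjective φ := by
  intro H hHtf K hKfg
  classical
  by_cases hK : K = ⊥
  · exact Or.inl hK
  right
  let j : ↥K →* G := H.subtype.comp K.subtype
  have hjinj : Function.Injective j := by
    intro x y hxy
    exact Subtype.coe_injective (Subtype.coe_injective hxy)
  let π := QuotientGroup.mk' N
  let j' : ↥K →* G ⧸ N := π.comp j
  have hKgrp : Group.FG ↥K := (Group.fg_iff_subgroup_fg K).mpr hKfg
  have hQfg : (j'.range).FG := by
    have h1 : Group.FG ↥(j'.range) := Group.fg_of_surjective j'.rangeRestrict_surjective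
    exact (Group.fg_iff_subgroup_fg _).mp h1
  rcases hquot j'.range hQfg with hQbot | ⟨ψ, hψ⟩
  swap
  · exact ⟨ψ.comp j'.rangeRestrict, hψ.comp j'.rangeRestrict_surjective⟩
  have hKN : ∀ x : ↥K, j x ∈ N := by
    intro x
    have h1 : j' x ∈ j'.range := ⟨x, rfl⟩
    rw [hQbot, Subgroup.mem_bot] at h1
    exact (QuotientGroup.eq_one_iff _).mp h1
  let F : ↥K →* ↥N := j.codRestrict N hKN
  let Ψ : ↥K →* Monoid.CoprodI C := e.toMonoidHom.comp F
  have hΨinj : Function.Injective Ψ := by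
    intro x y hxy
    have h1 : F x = F y := e.injective hxy
    have h2 : j x = j y := congrArg (fun z : ↥N => (z : G)) h1
    exact hjinj h2
  have htf' : ∀ g ∈ Ψ.range, IsOfFinOrder g → g = 1 := by
    rintro g ⟨x, rfl⟩ hord
    have h2 := orderOf_injective Ψ hΨinj x
    have h1 : IsOfFinOrder x := by
      rw [← orderOf_pos_iff] at hord ⊢
      omega
    have h3 : IsOfFinOrder (j x) := j.isOfFinOrder h1
    have h4 : j x = 1 := hHtf (j x) (x : ↥H).2 h3
    have h5 : x = 1 := hjinj (by rw [h4, map_one])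
    rw [h5, map_one]
  have hne' : Ψ.range ≠ ⊥ := by
    obtain ⟨x, hxK, hx1⟩ := K.bot_or_exists_ne_one.resolve_left hK
    intro hb
    have h1 : Ψ ⟨x, hxK⟩ ∈ Ψ.range := ⟨_, rfl⟩
    rw [hb, Subgroup.mem_bot] at h1
    have h2 : (⟨x, hxK⟩ : ↥K) = 1 := hΨinj (by rw [h1, map_one])
    exact hx1 (congrArg Subtype.val h2)
  obtain ⟨φ', hφ'⟩ := Stmt14Aux.freeprod_main C Ψ.range htf' hne'
  exact ⟨φ'.comp Ψ.rangeRestrict, hφ'.comp Ψ.rangeRestrict_surjective⟩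
end
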